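/- arXiv:2011.14367 — 2 statements merged into one kernel-verified Lean document; each statement's English description precedes it below -/
import Mathlib

section
/- The set of subfields F of the algebraic closure of ℚ that are PAC is a G_δ subset of the space 𝓔 of all subfields of the algebraic closure of ℚ; explicitly, it equals the intersection over all irreducible f ∈ Q̄[X,Y] of the open sets U_f = {F ∈ 𝓔 : f ∉ F[X,Y]} ∪ ⋃_{(x,y) ∈ Q̄², f(x,y)=0} {F ∈ 𝓔 : x ∈ F and y ∈ F}, and this is a countable intersection. -/
open FirstOrder Topology

noncomputable section

/-- `Q̄`, the algebraic closure of `ℚ`. -/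
abbrev Qbar : Type := AlgebraicClosure ℚ

/-- `Prop` with the discrete two-point topology. -/
def propDiscrete : TopologicalSpace Prop := ⊥

/-- The product topology on the powerset `2^Q̄`, identified with `Set Q̄ = Q̄ → Prop`,
where each factor `Prop` carries the discrete two-point topology. -/
def powersetTopology : TopologicalSpace (Set Qbar) :=
  @Pi.topologicalSpace Qbar (fun _ => Prop) (fun _ => propDiscrete)

/-- The space `𝓔` of all subfields of `Q̄`, with the subspace topology induced from `2^Q̄`
via the identification of a subfield with its underlying set of elements. -/
instance subfieldTopology : TopologicalSpace (Subfield Qbar) :=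
  powersetTopology.induced (fun F => (F : Set Qbar))

/-- A subfield `F` of `Q̄` is PAC if every polynomial `f ∈ F[X,Y]` that is absolutely
irreducible (i.e. whose image in `Q̄[X,Y]` is irreducible) has a zero `(x,y) ∈ F × F`. -/
def IsPAC (F : Subfield Qbar) : Prop :=
  ∀ f : MvPolynomial (Fin 2) F,
    Irreducible (MvPolynomial.map F.subtype f) →
    ∃ x y : F, MvPolynomial.eval ![x, y] f = 0

/-- The set `U_f = {F ∈ 𝓔 : f ∉ F[X,Y]} ∪ ⋃_{(x,y) ∈ Q̄², f(x,y)=0} {F ∈ 𝓔 : x,y ∈ F}`. -/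
def U (f : MvPolynomial (Fin 2) Qbar) : Set (Subfield Qbar) :=
  {F | ¬ ∀ m, f.coeff m ∈ F} ∪
    ⋃ (p : Qbar × Qbar) (_ : MvPolynomial.eval ![p.1, p.2] f = 0),
      {F | p.1 ∈ F ∧ p.2 ∈ F}


/-- The basic set `{F : c ∈ F}` is open in `𝓔`. -/
lemma isOpen_memSet (c : Qbar) : IsOpen {F : Subfield Qbar | c ∈ F} := by
  have h : @IsOpen _ powersetTopology {S : Set Qbar | c ∈ S} := by
    have : @Continuous _ _ powersetTopology propDiscrete (fun S : Set Qbar => S c) :=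
      @continuous_apply Qbar (fun _ => Prop) (fun _ => propDiscrete) c
    exact @Continuous.isOpen_preimage _ _ powersetTopology propDiscrete _ this {p : Prop | p} trivial
  exact ⟨_, h, rfl⟩

/-- The basic set `{F : c ∉ F}` is open in `𝓔`. -/
lemma isOpen_notMemSet (c : Qbar) : IsOpen {F : Subfield Qbar | c ∉ F} := by
  have h : @IsOpen _ powersetTopology {S : Set Qbar | c ∉ S} := by
    have : @Continuous _ _ powersetTopology propDiscrete (fun S : Set Qbar => S c) :=
      @continuous_apply Qbar (fun _ => Prop) (fun _ => propDiscrete) c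
    exact @Continuous.isOpen_preimage _ _ powersetTopology propDiscrete _ this
      {p : Prop | ¬ p} trivial
  exact ⟨_, h, rfl⟩

set_option maxHeartbeats 1000000 in
set_option synthInstance.maxHeartbeats 200000 in
/-- A polynomial all of whose coefficients lie in `F` comes from `F[X,Y]`. -/
lemma exists_lift (F : Subfield Qbar) (f : MvPolynomial (Fin 2) Qbar)
    (h : ∀ m, f.coeff m ∈ F) : ∃ g : MvPolynomial (Fin 2) F,
    MvPolynomial.map F.subtype g = f := by
  refine ⟨∑ m ∈ f.support, MvPolynomial.monomial m (⟨f.coeff m, h m⟩ : F), ?_⟩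
  rw [map_sum]
  simp only [MvPolynomial.map_monomial]
  exact MvPolynomial.support_sum_monomial_coeff f

lemma countable_Qbar : Countable Qbar := by
  have h := Algebraic.countable ℚ Qbar
  have : { x : Qbar | IsAlgebraic ℚ x } = Set.univ := by
    ext x; simp only [Set.mem_setOf_eq, Set.mem_univ, iff_true]
    have e : AlgebraicClosure.instAlgebra ℚ = (DivisionRing.toRatAlgebra : Algebra ℚ Qbar) :=
      Subsingleton.elim _ _
    exact e ▸ (AlgebraicClosure.isAlgebraic ℚ).isAlgebraic x
  rw [this] at h
  exact Set.countable_univ_iff.mp h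

lemma countable_mvpoly : Countable (MvPolynomial (Fin 2) Qbar) := by
  have := countable_Qbar
  unfold MvPolynomial
  exact AddMonoidAlgebra.coeff_injective.countable

/-- Evaluating a mapped polynomial at points of `F` agrees with evaluating over `F`. -/
lemma eval_lift (F : Subfield Qbar) (g : MvPolynomial (Fin 2) F) (x y : F) :
    MvPolynomial.eval ![(x : Qbar), (y : Qbar)] (MvPolynomial.map F.subtype g)
      = F.subtype (MvPolynomial.eval ![x, y] g) := by
  have hv : ![(x : Qbar), (y : Qbar)] = F.subtype ∘ ![x, y] := by
    funext i; fin_cases i <;> rfl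
  rw [MvPolynomial.eval_map, hv]
  have h := MvPolynomial.eval₂_comp_left F.subtype (RingHom.id F) ![x, y] g
  rw [MvPolynomial.eval₂_id, RingHom.comp_id] at h
  exact h.symm

set_option maxHeartbeats 1000000 in

/-- The set of PAC subfields of `Q̄` is a `G_δ` subset of `𝓔`: explicitly, it is the
intersection of the sets `U_f` over all irreducible `f ∈ Q̄[X,Y]`, each `U_f` is open,
and this is a countable intersection. -/
theorem pac_Gdelta_explicit :
    ({F : Subfield Qbar | IsPAC F} =
        ⋂ f ∈ {f : MvPolynomial (Fin 2) Qbar | Irreducible f}, U f) ∧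
      (∀ f : MvPolynomial (Fin 2) Qbar, Irreducible f → IsOpen (U f)) ∧
      {f : MvPolynomial (Fin 2) Qbar | Irreducible f}.Countable ∧
      IsGδ {F : Subfield Qbar | IsPAC F} := by
  have hopen : ∀ f : MvPolynomial (Fin 2) Qbar, IsOpen (U f) := by
    intro f
    apply IsOpen.union
    · have : {F : Subfield Qbar | ¬ ∀ m, f.coeff m ∈ F}
          = ⋃ m : (Fin 2 →₀ ℕ), {F : Subfield Qbar | f.coeff m ∉ F} := by
        ext F; simp [not_forall]
      rw [this]
      exact isOpen_iUnion fun m => isOpen_notMemSet _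
    · refine isOpen_iUnion fun p => isOpen_iUnion fun _ => ?_
      have : {F : Subfield Qbar | p.1 ∈ F ∧ p.2 ∈ F}
          = {F : Subfield Qbar | p.1 ∈ F} ∩ {F : Subfield Qbar | p.2 ∈ F} := rfl
      rw [this]
      exact (isOpen_memSet _).inter (isOpen_memSet _)
  have hcount : {f : MvPolynomial (Fin 2) Qbar | Irreducible f}.Countable := by
    have := countable_mvpoly
    exact Set.to_countable _
  have heq : {F : Subfield Qbar | IsPAC F} =
      ⋂ f ∈ {f : MvPolynomial (Fin 2) Qbar | Irreducible f}, U f := by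
    ext F
    simp only [Set.mem_setOf_eq, Set.mem_iInter]
    constructor
    · intro hF f hf
      by_cases hc : ∀ m, f.coeff m ∈ F
      · obtain ⟨g, hg⟩ := exists_lift F f hc
        obtain ⟨x, y, hxy⟩ := hF g (hg ▸ hf)
        refine Set.mem_union_right _ ?_
        refine Set.mem_iUnion.2 ⟨((x : Qbar), (y : Qbar)), Set.mem_iUnion.2 ⟨?_, x.2, y.2⟩⟩
        rw [← hg]
        show MvPolynomial.eval ![(x : Qbar), (y : Qbar)] (MvPolynomial.map F.subtype g) = 0
        rw [eval_lift, hxy, map_zero]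
      · exact Set.mem_union_left _ hc
    · intro hF g hg
      have hmem := hF (MvPolynomial.map F.subtype g) hg
      rcases hmem with hbad | hz
      · exfalso
        exact hbad fun m => by
          rw [MvPolynomial.coeff_map]; exact (g.coeff m).2
      · obtain ⟨p, hp⟩ := Set.mem_iUnion.1 hz
        obtain ⟨h0, hx, hy⟩ := Set.mem_iUnion.1 hp
        refine ⟨⟨p.1, hx⟩, ⟨p.2, hy⟩, Subtype.ext ?_⟩
        have h1 := eval_lift F g ⟨p.1, hx⟩ ⟨p.2, hy⟩
        simpa using h1.symm.trans h0
  refine ⟨heq, fun f _ => hopen f, hcount, ?_⟩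
  rw [heq]
  exact IsGδ.biInter hcount fun f _ => (hopen f).isGδ
end
end

section
/- The quotient map from the space 𝓔 of all subfields of Q̄ to the quotient space 𝓔̄ of 𝓔 by the equivalence relation of field isomorphism (with the quotient topology) is a closed map, i.e., the image of every closed subset of 𝓔 is closed in 𝓔̄. -/
open FirstOrder Topology

noncomputable section

/-- Type synonym for `Prop` carrying the discrete topology. -/
def PProp : Type := Prop
instance : TopologicalSpace PProp := propDiscrete
instance : DiscreteTopology PProp := ⟨rfl⟩
instance : Finite PProp := Finite.of_equiv Bool Equiv.propEquivBool.symm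

def PProp.holds (p : PProp) : Prop := p

/-- Type synonym for `Set Qbar` carrying `powersetTopology`. -/
abbrev PS : Type := Qbar → PProp

def PS.mem (S : PS) (x : Qbar) : Prop := S x

/-- The coercion map, valued in the synonym. -/
def cmap (F : Subfield Qbar) : PS := fun x => x ∈ F

lemma mem_cmap {F : Subfield Qbar} {x : Qbar} : (cmap F).mem x ↔ x ∈ F := Iff.rfl

lemma cmap_inducing : IsInducing cmap := ⟨rfl⟩

lemma continuous_eval (x : Qbar) : Continuous (fun S : PS => S x) := continuous_apply x

lemma isClosed_memSet (x : Qbar) : IsClosed {S : PS | S.mem x} :=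
  IsClosed.preimage (continuous_eval x) (isClosed_discrete {p : PProp | p.holds})

lemma isClosed_memSetC (x : Qbar) : IsClosed {S : PS | ¬ S.mem x} :=
  IsClosed.preimage (continuous_eval x) (isClosed_discrete {p : PProp | ¬ p.holds})

lemma isOpen_memSet_s19 (x : Qbar) : IsOpen {S : PS | S.mem x} :=
  IsOpen.preimage (continuous_eval x) (isOpen_discrete {p : PProp | p.holds})

lemma isOpen_memSetC (x : Qbar) : IsOpen {S : PS | ¬ S.mem x} :=
  IsOpen.preimage (continuous_eval x) (isOpen_discrete {p : PProp | ¬ p.holds})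

lemma range_cmap_closed : IsClosed (Set.range cmap) := by
  have key : Set.range cmap =
      {S : PS | S.mem 1} ∩
      (⋂ (x : Qbar) (y : Qbar), ({S : PS | ¬ S.mem x} ∪ {S | ¬ S.mem y} ∪ {S | S.mem (x * y)})) ∩
      (⋂ (x : Qbar) (y : Qbar), ({S : PS | ¬ S.mem x} ∪ {S | ¬ S.mem y} ∪ {S | S.mem (x + y)})) ∩
      (⋂ (x : Qbar), ({S : PS | ¬ S.mem x} ∪ {S | S.mem (-x)})) ∩
      (⋂ (x : Qbar), ({S : PS | ¬ S.mem x} ∪ {S | S.mem x⁻¹})) := by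
    ext S
    simp only [Set.mem_inter_iff, Set.mem_iInter, Set.mem_union, Set.mem_setOf_eq,
      Set.mem_range]
    constructor
    · rintro ⟨F, rfl⟩
      refine ⟨⟨⟨⟨F.one_mem, ?_⟩, ?_⟩, ?_⟩, ?_⟩
      · intro x y; by_cases hx : x ∈ F
        · by_cases hy : y ∈ F
          · exact Or.inr (F.mul_mem hx hy)
          · exact Or.inl (Or.inr hy)
        · exact Or.inl (Or.inl hx)
      · intro x y; by_cases hx : x ∈ F
        · by_cases hy : y ∈ F
          · exact Or.inr (F.add_mem hx hy)
          · exact Or.inl (Or.inr hy)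
        · exact Or.inl (Or.inl hx)
      · intro x; by_cases hx : x ∈ F
        · exact Or.inr (F.neg_mem hx)
        · exact Or.inl hx
      · intro x; by_cases hx : x ∈ F
        · exact Or.inr (F.inv_mem hx)
        · exact Or.inl hx
    · rintro ⟨⟨⟨⟨h1, hmul⟩, hadd⟩, hneg⟩, hinv⟩
      have hn : S.mem (-1 : Qbar) := by rcases hneg 1 with h|h; exact absurd h1 h; exact h
      have h0 : S.mem (0 : Qbar) := by
        have h : S.mem ((1 : Qbar) + (-1)) := by
          rcases hadd 1 (-1) with (h|h)|h
          · exact absurd h1 h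
          · exact absurd hn h
          · exact h
        rw [add_neg_cancel] at h
        exact h
      refine ⟨{ carrier := {x : Qbar | S.mem x}
                one_mem' := h1
                mul_mem' := ?_
                add_mem' := ?_
                zero_mem' := h0
                neg_mem' := ?_
                inv_mem' := ?_ }, ?_⟩
      · intro x y hx hy
        rcases hmul x y with (h|h)|h
        · exact absurd hx h
        · exact absurd hy h
        · exact h
      · intro x y hx hy
        rcases hadd x y with (h|h)|h
        · exact absurd hx h
        · exact absurd hy h
        · exact h
      · intro x hx; rcases hneg x with h|h; exact absurd hx h; exact h
      · intro x hx; rcases hinv x with h|h; exact absurd hx h; exact h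
      · rfl
  rw [key]
  refine ((((isClosed_memSet 1).inter ?_).inter ?_).inter ?_).inter ?_
  · exact isClosed_iInter fun x => isClosed_iInter fun y =>
      ((isClosed_memSetC x).union (isClosed_memSetC y)).union (isClosed_memSet _)
  · exact isClosed_iInter fun x => isClosed_iInter fun y =>
      ((isClosed_memSetC x).union (isClosed_memSetC y)).union (isClosed_memSet _)
  · exact isClosed_iInter fun x => (isClosed_memSetC x).union (isClosed_memSet _)
  · exact isClosed_iInter fun x => (isClosed_memSetC x).union (isClosed_memSet _)

instance compact_subfields : CompactSpace (Subfield Qbar) := by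
  rw [← isCompact_univ_iff, cmap_inducing.isCompact_iff, Set.image_univ]
  exact range_cmap_closed.isCompact

lemma aeval_subtype {F : Subfield Qbar} (a : F) (μ : Polynomial ℚ) :
    Polynomial.aeval (a : Qbar) μ = (Polynomial.aeval a μ : F) :=
  (Polynomial.aeval_algHom_apply (F.subtype.toRatAlgHom) a μ)

lemma aeval_map_root {F K : Subfield Qbar} (e : F →+* K) {x : Qbar} (hx : x ∈ F) :
    Polynomial.aeval ((e ⟨x, hx⟩ : K) : Qbar) (minpoly ℚ x) = 0 := by
  set μ := minpoly ℚ x with hμ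
  have hx' : Polynomial.aeval (⟨x, hx⟩ : F) μ = 0 := by
    have h0 : Polynomial.aeval x μ = 0 := minpoly.aeval ℚ x
    have := aeval_subtype (F := F) ⟨x, hx⟩ μ
    simp only at this
    apply Subtype.val_injective
    rw [← this]
    exact h0
  have h2 : Polynomial.aeval (e ⟨x, hx⟩) μ = 0 := by
    have := Polynomial.aeval_algHom_apply (e.toRatAlgHom) (⟨x, hx⟩ : F) μ
    rw [show e.toRatAlgHom ⟨x,hx⟩ = e ⟨x,hx⟩ from rfl] at this
    rw [this, hx', map_zero]
  rw [aeval_subtype, h2]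
  rfl

lemma rootSet_finite (x : Qbar) :
    {y : Qbar | Polynomial.aeval y (minpoly ℚ x) = 0}.Finite := by
  have hne : minpoly ℚ x ≠ 0 := minpoly.ne_zero ((AlgebraicClosure.isAlgebraic (k := ℚ)).isAlgebraic x).isIntegral
  have hmapne : (minpoly ℚ x).map (algebraMap ℚ Qbar) ≠ 0 :=
    Polynomial.map_ne_zero_iff (algebraMap ℚ Qbar).injective |>.mpr hne
  have : {y : Qbar | Polynomial.aeval y (minpoly ℚ x) = 0}
      = {y : Qbar | ((minpoly ℚ x).map (algebraMap ℚ Qbar)).IsRoot y} := by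
    ext y
    rw [Set.mem_setOf_eq, Set.mem_setOf_eq, Polynomial.IsRoot, Polynomial.aeval_def,
      Polynomial.eval₂_eq_eval_map]
  rw [this]
  exact Polynomial.finite_setOf_isRoot hmapne

open Classical in
/-- A choice of isomorphism data: for each pair of subfields, if they are isomorphic,
`gfun p` is (the underlying function of) a chosen isomorphism `p.1 → p.2`. -/
def gfun (p : Subfield Qbar × Subfield Qbar) (x : Qbar) : Qbar :=
  if h : Nonempty (p.1 ≃+* p.2) then
    if hx : x ∈ p.1 then ((Classical.choice h) ⟨x, hx⟩ : Qbar) else 0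
  else 0

open Classical in
/-- The inverse of the chosen isomorphism. -/
def gfun' (p : Subfield Qbar × Subfield Qbar) (z : Qbar) : Qbar :=
  if h : Nonempty (p.1 ≃+* p.2) then
    if hz : z ∈ p.2 then (((Classical.choice h).symm ⟨z, hz⟩ : p.1) : Qbar) else 0
  else 0

section gfunLemmas

variable {p : Subfield Qbar × Subfield Qbar}

lemma gfun_eq (h : Nonempty (p.1 ≃+* p.2)) {x : Qbar} (hx : x ∈ p.1) :
    gfun p x = ((Classical.choice h) ⟨x, hx⟩ : Qbar) := by
  rw [gfun, dif_pos h, dif_pos hx]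

lemma gfun'_eq (h : Nonempty (p.1 ≃+* p.2)) {z : Qbar} (hz : z ∈ p.2) :
    gfun' p z = (((Classical.choice h).symm ⟨z, hz⟩ : p.1) : Qbar) := by
  rw [gfun', dif_pos h, dif_pos hz]

lemma gfun_mem2 (h : Nonempty (p.1 ≃+* p.2)) {x : Qbar} (hx : x ∈ p.1) : gfun p x ∈ p.2 := by
  rw [gfun_eq h hx]; exact ((Classical.choice h) ⟨x, hx⟩).2

lemma gfun'_mem1 (h : Nonempty (p.1 ≃+* p.2)) {z : Qbar} (hz : z ∈ p.2) : gfun' p z ∈ p.1 := by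
  rw [gfun'_eq h hz]; exact ((Classical.choice h).symm ⟨z, hz⟩).2

lemma gfun_add (h : Nonempty (p.1 ≃+* p.2)) {x y : Qbar} (hx : x ∈ p.1) (hy : y ∈ p.1) :
    gfun p (x + y) = gfun p x + gfun p y := by
  rw [gfun_eq h hx, gfun_eq h hy, gfun_eq h (p.1.add_mem hx hy)]
  rw [show (⟨x + y, p.1.add_mem hx hy⟩ : p.1) = ⟨x, hx⟩ + ⟨y, hy⟩ from rfl, map_add]
  rfl

lemma gfun_mul (h : Nonempty (p.1 ≃+* p.2)) {x y : Qbar} (hx : x ∈ p.1) (hy : y ∈ p.1) :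
    gfun p (x * y) = gfun p x * gfun p y := by
  rw [gfun_eq h hx, gfun_eq h hy, gfun_eq h (p.1.mul_mem hx hy)]
  rw [show (⟨x * y, p.1.mul_mem hx hy⟩ : p.1) = ⟨x, hx⟩ * ⟨y, hy⟩ from rfl, map_mul]
  rfl

lemma gfun_one (h : Nonempty (p.1 ≃+* p.2)) : gfun p 1 = 1 := by
  rw [gfun_eq h p.1.one_mem, show (⟨(1 : Qbar), p.1.one_mem⟩ : p.1) = 1 from rfl, map_one]
  rfl

lemma gfun_zero (h : Nonempty (p.1 ≃+* p.2)) : gfun p 0 = 0 := by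
  rw [gfun_eq h p.1.zero_mem, show (⟨(0 : Qbar), p.1.zero_mem⟩ : p.1) = 0 from rfl, map_zero]
  rfl

lemma gfun_root (h : Nonempty (p.1 ≃+* p.2)) {x : Qbar} (hx : x ∈ p.1) :
    Polynomial.aeval (gfun p x) (minpoly ℚ x) = 0 := by
  rw [gfun_eq h hx]
  exact aeval_map_root (Classical.choice h).toRingHom hx

lemma gfun'_root (h : Nonempty (p.1 ≃+* p.2)) {z : Qbar} (hz : z ∈ p.2) :
    Polynomial.aeval (gfun' p z) (minpoly ℚ z) = 0 := by
  rw [gfun'_eq h hz]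
  exact aeval_map_root (Classical.choice h).symm.toRingHom hz

lemma gfun_gfun' (h : Nonempty (p.1 ≃+* p.2)) {z : Qbar} (hz : z ∈ p.2) :
    gfun p (gfun' p z) = z := by
  rw [gfun_eq h (gfun'_mem1 h hz)]
  have : (⟨gfun' p z, gfun'_mem1 h hz⟩ : p.1) = (Classical.choice h).symm ⟨z, hz⟩ :=
    Subtype.ext (gfun'_eq h hz)
  rw [this, RingEquiv.apply_symm_apply]

end gfunLemmas

lemma isClosed_isoRel :
    IsClosed {p : Subfield Qbar × Subfield Qbar | Nonempty (p.1 ≃+* p.2)} := by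
  apply isClosed_of_closure_subset
  rintro ⟨F, K⟩ hFK
  rw [mem_closure_iff_ultrafilter] at hFK
  obtain ⟨u, huR, hconv⟩ := hFK
  simp only [Set.mem_setOf_eq]
  -- coordinate convergence facts
  have hc1 : ∀ x : Qbar, x ∈ F → {p : Subfield Qbar × Subfield Qbar | x ∈ p.1} ∈ u := by
    intro x hx
    refine hconv (IsOpen.mem_nhds ?_ hx)
    exact (isOpen_memSet_s19 x).preimage (cmap_inducing.continuous.comp continuous_fst)
  have hc2 : ∀ z : Qbar, z ∈ K → {p : Subfield Qbar × Subfield Qbar | z ∈ p.2} ∈ u := by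
    intro z hz
    refine hconv (IsOpen.mem_nhds ?_ hz)
    exact (isOpen_memSet_s19 z).preimage (cmap_inducing.continuous.comp continuous_snd)
  have hc1' : ∀ x : Qbar, x ∉ F → {p : Subfield Qbar × Subfield Qbar | x ∉ p.1} ∈ u := by
    intro x hx
    refine hconv (IsOpen.mem_nhds ?_ hx)
    exact (isOpen_memSetC x).preimage (cmap_inducing.continuous.comp continuous_fst)
  have hc2' : ∀ z : Qbar, z ∉ K → {p : Subfield Qbar × Subfield Qbar | z ∉ p.2} ∈ u := by
    intro z hz
    refine hconv (IsOpen.mem_nhds ?_ hz)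
    exact (isOpen_memSetC z).preimage (cmap_inducing.continuous.comp continuous_snd)
  -- uniqueness of ultrafilter limits
  have huniq : ∀ (x y y' : Qbar), {p : Subfield Qbar × Subfield Qbar | gfun p x = y} ∈ u →
      {p : Subfield Qbar × Subfield Qbar | gfun p x = y'} ∈ u → y = y' := by
    intro x y y' h1 h2
    obtain ⟨p, hp1, hp2⟩ := Filter.nonempty_of_mem (Filter.inter_mem h1 h2)
    exact hp1.symm.trans hp2
  -- forward limit values
  have hvalK : ∀ x : Qbar, x ∈ F → ∃ y : Qbar, y ∈ K ∧
      {p : Subfield Qbar × Subfield Qbar | gfun p x = y} ∈ u := by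
    intro x hx
    have hbig : {p : Subfield Qbar × Subfield Qbar |
        Nonempty (p.1 ≃+* p.2) ∧ x ∈ p.1} ∈ u := Filter.inter_mem huR (hc1 x hx)
    have hroots : (fun p : Subfield Qbar × Subfield Qbar => gfun p x) ⁻¹'
        {y : Qbar | Polynomial.aeval y (minpoly ℚ x) = 0} ∈ u :=
      Filter.mem_of_superset hbig (fun p hp => gfun_root hp.1 hp.2)
    obtain ⟨y, _, hpure⟩ := Ultrafilter.eq_pure_of_finite_mem (rootSet_finite x)
      (Ultrafilter.mem_map.mpr hroots)
    have hgy : {p : Subfield Qbar × Subfield Qbar | gfun p x = y} ∈ u := by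
      have h1 : ({y} : Set Qbar) ∈ Ultrafilter.map (fun p => gfun p x) u := by
        rw [hpure]; exact rfl
      exact Ultrafilter.mem_map.mp h1
    refine ⟨y, ?_, hgy⟩
    by_contra hyK
    obtain ⟨p, hp⟩ := Filter.nonempty_of_mem
      (Filter.inter_mem (Filter.inter_mem hbig hgy) (hc2' y hyK))
    exact hp.2 (hp.1.2 ▸ gfun_mem2 hp.1.1.1 hp.1.1.2)
  -- backward limit values
  have hvalF : ∀ z : Qbar, z ∈ K → ∃ w : Qbar, w ∈ F ∧
      {p : Subfield Qbar × Subfield Qbar | gfun' p z = w} ∈ u := by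
    intro z hz
    have hbig : {p : Subfield Qbar × Subfield Qbar |
        Nonempty (p.1 ≃+* p.2) ∧ z ∈ p.2} ∈ u := Filter.inter_mem huR (hc2 z hz)
    have hroots : (fun p : Subfield Qbar × Subfield Qbar => gfun' p z) ⁻¹'
        {w : Qbar | Polynomial.aeval w (minpoly ℚ z) = 0} ∈ u :=
      Filter.mem_of_superset hbig (fun p hp => gfun'_root hp.1 hp.2)
    obtain ⟨w, _, hpure⟩ := Ultrafilter.eq_pure_of_finite_mem (rootSet_finite z)
      (Ultrafilter.mem_map.mpr hroots)
    have hgw : {p : Subfield Qbar × Subfield Qbar | gfun' p z = w} ∈ u := by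
      have h1 : ({w} : Set Qbar) ∈ Ultrafilter.map (fun p => gfun' p z) u := by
        rw [hpure]; exact rfl
      exact Ultrafilter.mem_map.mp h1
    refine ⟨w, ?_, hgw⟩
    by_contra hwF
    obtain ⟨p, hp⟩ := Filter.nonempty_of_mem
      (Filter.inter_mem (Filter.inter_mem hbig hgw) (hc1' w hwF))
    exact hp.2 (hp.1.2 ▸ gfun'_mem1 hp.1.1.1 hp.1.1.2)
  choose φ hφK hφu using hvalK
  choose ψ hψF hψu using hvalF
  -- φ is a ring hom
  have hmapone : φ 1 F.one_mem = 1 := by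
    refine huniq 1 _ _ (hφu 1 F.one_mem) ?_
    exact Filter.mem_of_superset huR (fun p hp => gfun_one hp)
  have hmapzero : φ 0 F.zero_mem = 0 := by
    refine huniq 0 _ _ (hφu 0 F.zero_mem) ?_
    exact Filter.mem_of_superset huR (fun p hp => gfun_zero hp)
  have hmapadd : ∀ (x y : Qbar) (hx : x ∈ F) (hy : y ∈ F),
      φ (x + y) (F.add_mem hx hy) = φ x hx + φ y hy := by
    intro x y hx hy
    refine huniq (x + y) _ _ (hφu _ _) ?_
    refine Filter.mem_of_superset
      (Filter.inter_mem (Filter.inter_mem (Filter.inter_mem huR (hc1 x hx)) (hc1 y hy))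
        (Filter.inter_mem (hφu x hx) (hφu y hy))) ?_
    rintro p ⟨⟨⟨hpR, hpx⟩, hpy⟩, hgx, hgy⟩
    simp only [Set.mem_setOf_eq]
    rw [gfun_add hpR hpx hpy, hgx, hgy]
  have hmapmul : ∀ (x y : Qbar) (hx : x ∈ F) (hy : y ∈ F),
      φ (x * y) (F.mul_mem hx hy) = φ x hx * φ y hy := by
    intro x y hx hy
    refine huniq (x * y) _ _ (hφu _ _) ?_
    refine Filter.mem_of_superset
      (Filter.inter_mem (Filter.inter_mem (Filter.inter_mem huR (hc1 x hx)) (hc1 y hy))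
        (Filter.inter_mem (hφu x hx) (hφu y hy))) ?_
    rintro p ⟨⟨⟨hpR, hpx⟩, hpy⟩, hgx, hgy⟩
    simp only [Set.mem_setOf_eq]
    rw [gfun_mul hpR hpx hpy, hgx, hgy]
  -- surjectivity
  have hsur : ∀ (z : Qbar) (hz : z ∈ K), φ (ψ z hz) (hψF z hz) = z := by
    intro z hz
    refine huniq (ψ z hz) _ _ (hφu _ _) ?_
    refine Filter.mem_of_superset
      (Filter.inter_mem (Filter.inter_mem huR (hc2 z hz)) (hψu z hz)) ?_
    rintro p ⟨⟨hpR, hpz⟩, hgz⟩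
    simp only [Set.mem_setOf_eq]
    rw [← hgz]
    exact gfun_gfun' hpR hpz
  let Φ : F →+* K :=
    { toFun := fun a => (⟨φ a a.2, hφK a a.2⟩ : K)
      map_one' := Subtype.ext hmapone
      map_zero' := Subtype.ext hmapzero
      map_add' := fun a b => Subtype.ext (hmapadd a b a.2 b.2)
      map_mul' := fun a b => Subtype.ext (hmapmul a b a.2 b.2) }
  have hsurj : Function.Surjective Φ := by
    intro z
    exact ⟨⟨ψ z z.2, hψF z z.2⟩, Subtype.ext (hsur z z.2)⟩
  exact ⟨RingEquiv.ofBijective Φ ⟨Φ.injective, hsurj⟩⟩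


/-- Two subfields of `Q̄` are equivalent iff they are isomorphic as fields
(equivalently, as rings). -/
def isoSetoid : Setoid (Subfield Qbar) where
  r F K := Nonempty (F ≃+* K)
  iseqv := ⟨fun _ => ⟨RingEquiv.refl _⟩, fun ⟨e⟩ => ⟨e.symm⟩, fun ⟨e⟩ ⟨e'⟩ => ⟨e.trans e'⟩⟩

/-- The quotient map from the space `𝓔` of all subfields of `Q̄` to the quotient space `𝓔̄`
of `𝓔` by field isomorphism (with the quotient topology) is a closed map. -/
theorem quotient_mk_isClosedMap :
    IsClosedMap (Quotient.mk isoSetoid : Subfield Qbar → Quotient isoSetoid) := by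
  intro C hC
  have hq : IsQuotientMap (Quotient.mk isoSetoid : Subfield Qbar → Quotient isoSetoid) :=
    isQuotientMap_quotient_mk'
  rw [← hq.isClosed_preimage]
  have heq : (Quotient.mk isoSetoid : Subfield Qbar → Quotient isoSetoid) ⁻¹'
      (Quotient.mk isoSetoid '' C) =
      Prod.snd '' ({p : Subfield Qbar × Subfield Qbar | Nonempty (p.1 ≃+* p.2)} ∩
        C ×ˢ Set.univ) := by
    ext L
    simp only [Set.mem_preimage, Set.mem_image, Set.mem_inter_iff, Set.mem_prod,
      Set.mem_setOf_eq, Set.mem_univ, and_true]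
    constructor
    · rintro ⟨F, hF, hqe⟩
      exact ⟨(F, L), ⟨Quotient.exact hqe, hF⟩, rfl⟩
    · rintro ⟨⟨F, L'⟩, ⟨hne, hFC⟩, rfl⟩
      exact ⟨F, hFC, Quotient.sound hne⟩
  rw [heq]
  exact isClosedMap_snd_of_compactSpace _ (isClosed_isoRel.inter (hC.prod isClosed_univ))
end
end
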